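/- Let A and B be C*-algebras and let f : A → B be a mapping with f(0) = 0 for which there exists a constant θ ≥ 0 such that ‖f((μb−a)/3) + f((a−3c)/3) + μ·f((3a−b)/3 + c) − f(a) + f(c²) − f(c)²‖ ≤ θ and ‖f(a*) − f(a)*‖ ≤ θ for all a, b, c ∈ A and all μ ∈ 𝕋¹. Then there exists a unique Jordan *-homomorphism h : A → B such that ‖f(a) − h(a)‖ ≤ θ for all a ∈ A. -/

import Mathlib

open Filter Topology

private lemma aux_geo (C : ℝ) :
    Tendsto (fun n : ℕ => C * (3⁻¹ : ℝ) ^ n) atTop (𝓝 0) := by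
  simpa using (tendsto_pow_atTop_nhds_zero_of_lt_one (r := (3⁻¹:ℝ))
    (by norm_num) (by norm_num)).const_mul C

private lemma aux_lim_zero {B : Type*} [NormedAddCommGroup B] (u : ℕ → B) (L : B)
    (hu : Tendsto u atTop (𝓝 L)) (C : ℝ)
    (hle : ∀ n, ‖u n‖ ≤ C * (3⁻¹ : ℝ) ^ n) : L = 0 := by
  refine tendsto_nhds_unique hu ?_
  rw [tendsto_zero_iff_norm_tendsto_zero]
  exact squeeze_zero (fun n => norm_nonneg _) hle (aux_geo C)

/-- Hyers–Ulam stability with constant bound `θ`. -/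
theorem stmt_10
    {A B : Type*}
    [NormedRing A] [StarRing A] [CStarRing A] [NormedAlgebra ℂ A] [StarModule ℂ A]
    [CompleteSpace A]
    [NormedRing B] [StarRing B] [CStarRing B] [NormedAlgebra ℂ B] [StarModule ℂ B]
    [CompleteSpace B]
    (f : A → B) (hf0 : f 0 = 0)
    (θ : ℝ) (hθ : 0 ≤ θ)
    (hineq : ∀ μ : ℂ, ‖μ‖ = 1 → ∀ a b c : A,
      ‖f ((3:ℂ)⁻¹ • (μ • b - a)) + f ((3:ℂ)⁻¹ • (a - (3:ℂ) • c)) +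
        μ • f ((3:ℂ)⁻¹ • ((3:ℂ) • a - b) + c) - f a + f (c ^ 2) - (f c) ^ 2‖ ≤ θ)
    (hstar : ∀ a : A, ‖f (star a) - star (f a)‖ ≤ θ) :
    ∃! h : A → B,
      (IsLinearMap ℂ h ∧ (∀ a : A, h (a ^ 2) = (h a) ^ 2) ∧
        (∀ a : A, h (star a) = star (h a))) ∧
      ∀ a : A, ‖f a - h a‖ ≤ θ := by
  -- Basic consequences of the functional inequality
  have E1 : ∀ x y : A, ‖f x + f y + f ((2:ℂ)•y - x) - f ((3:ℂ)•y)‖ ≤ θ := by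
    intro x y
    have H := hineq 1 (by norm_num) ((3:ℂ)•y) ((3:ℂ)•(x+y)) 0
    have e1 : (3:ℂ)⁻¹ • ((1:ℂ) • ((3:ℂ)•(x+y)) - (3:ℂ)•y) = x := by module
    have e2 : (3:ℂ)⁻¹ • ((3:ℂ)•y - (3:ℂ)•(0:A)) = y := by module
    have e3 : (3:ℂ)⁻¹ • ((3:ℂ)•((3:ℂ)•y) - (3:ℂ)•(x+y)) + (0:A) = (2:ℂ)•y - x := by
      module
    rw [e1, e2, e3] at H
    simpa [hf0] using H
  have E2 : ∀ y : A, ‖f ((3:ℂ)•y) - (3:ℂ)•f y‖ ≤ θ := by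
    intro y
    have H := E1 y y
    have e1 : (2:ℂ)•y - y = y := by module
    rw [e1] at H
    have e2 : f y + f y + f y - f ((3:ℂ)•y) = -(f ((3:ℂ)•y) - (3:ℂ)•f y) := by module
    rw [e2, norm_neg] at H
    exact H
  have Eμ : ∀ μ : ℂ, ‖μ‖ = 1 → ∀ x : A, ‖f (μ•x) + μ • f (-x)‖ ≤ θ := by
    intro μ hμ x
    have H := hineq μ hμ 0 ((3:ℂ)•x) 0
    have e1 : (3:ℂ)⁻¹ • (μ • ((3:ℂ)•x) - 0) = μ • x := by module
    have e2 : (3:ℂ)⁻¹ • ((0:A) - (3:ℂ)•(0:A)) = 0 := by module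
    have e3 : (3:ℂ)⁻¹ • ((3:ℂ)•(0:A) - (3:ℂ)•x) + (0:A) = -x := by module
    rw [e1, e2, e3] at H
    simpa [hf0] using H
  have Ec : ∀ c : A, ‖f (-c) + f c + f (c^2) - (f c)^2‖ ≤ θ := by
    intro c
    have H := hineq 1 (by norm_num) 0 0 c
    have e1 : (3:ℂ)⁻¹ • ((1:ℂ) • (0:A) - 0) = 0 := by module
    have e2 : (3:ℂ)⁻¹ • ((0:A) - (3:ℂ)•c) = -c := by module
    have e3 : (3:ℂ)⁻¹ • ((3:ℂ)•(0:A) - (0:A)) + c = c := by module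
    rw [e1, e2, e3] at H
    simpa [hf0] using H
  -- The approximating sequence
  set S : ℕ → A → B := fun n a => ((3:ℂ)^n)⁻¹ • f ((3:ℂ)^n • a) with hSdef
  have h3 : ‖(3:ℂ)‖ = 3 := by norm_num
  have hnorm3 : ∀ n : ℕ, ‖((3:ℂ)^n)⁻¹‖ = (3⁻¹:ℝ)^n := by
    intro n
    rw [norm_inv, norm_pow, h3, ← inv_pow]
  have hstep : ∀ (a : A) (n : ℕ), dist (S n a) (S (n+1) a) ≤ (θ/3) * (3⁻¹:ℝ)^n := by
    intro a n
    rw [dist_eq_norm]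
    have harg : (3:ℂ)^(n+1) • a = (3:ℂ) • ((3:ℂ)^n • a) := by
      rw [smul_smul, ← pow_succ']
    have hsc : ((3:ℂ)^n)⁻¹ = ((3:ℂ)^(n+1))⁻¹ * 3 := by
      rw [pow_succ, mul_inv, mul_assoc, inv_mul_cancel₀ (by norm_num : (3:ℂ) ≠ 0), mul_one]
    have e : S n a - S (n+1) a
        = ((3:ℂ)^(n+1))⁻¹ • ((3:ℂ) • f ((3:ℂ)^n • a) - f ((3:ℂ) • ((3:ℂ)^n • a))) := by
      simp only [hSdef]
      rw [smul_sub, smul_smul, ← harg, ← hsc]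
    rw [e, norm_smul, hnorm3]
    have hb : ‖(3:ℂ) • f ((3:ℂ)^n • a) - f ((3:ℂ) • ((3:ℂ)^n • a))‖ ≤ θ := by
      rw [← norm_neg, neg_sub]
      exact E2 _
    calc (3⁻¹:ℝ)^(n+1) * ‖(3:ℂ) • f ((3:ℂ)^n • a) - f ((3:ℂ) • ((3:ℂ)^n • a))‖
        ≤ (3⁻¹:ℝ)^(n+1) * θ := mul_le_mul_of_nonneg_left hb (by positivity)
      _ = (θ/3) * (3⁻¹:ℝ)^n := by ring
  have hex : ∀ a : A, ∃ L : B, Tendsto (fun n => S n a) atTop (𝓝 L) := fun a =>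
    cauchySeq_tendsto_of_complete
      (cauchySeq_of_le_geometric 3⁻¹ (θ/3) (by norm_num) (hstep a))
  choose h hs using hex
  -- the approximation bound
  have hbound : ∀ a : A, ‖f a - h a‖ ≤ θ := by
    intro a
    have H := dist_le_of_le_geometric_of_tendsto₀ 3⁻¹ (θ/3) (by norm_num) (hstep a) (hs a)
    have hS0 : S 0 a = f a := by simp [hSdef]
    rw [hS0, dist_eq_norm] at H
    have he : (θ/3) / (1 - 3⁻¹ : ℝ) = θ/2 := by ring
    rw [he] at H
    linarith
  -- limit identity 1 : main additive-type identity
  have L1 : ∀ x y : A, h x + h y + h ((2:ℂ)•y - x) - h ((3:ℂ)•y) = 0 := by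
    intro x y
    refine aux_lim_zero (fun n => S n x + S n y + S n ((2:ℂ)•y - x) - S n ((3:ℂ)•y)) _
      ((((hs x).add (hs y)).add (hs _)).sub (hs _)) θ ?_
    intro n
    try dsimp only
    have e1 : (3:ℂ)^n • ((2:ℂ)•y - x) = (2:ℂ)•((3:ℂ)^n • y) - (3:ℂ)^n • x := by module
    have e2 : (3:ℂ)^n • ((3:ℂ)•y) = (3:ℂ)•((3:ℂ)^n • y) := by module
    have e3 : S n x + S n y + S n ((2:ℂ)•y - x) - S n ((3:ℂ)•y)
        = ((3:ℂ)^n)⁻¹ • (f ((3:ℂ)^n • x) + f ((3:ℂ)^n • y)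
            + f ((2:ℂ)•((3:ℂ)^n • y) - (3:ℂ)^n • x) - f ((3:ℂ)•((3:ℂ)^n • y))) := by
      simp only [hSdef, e1, e2]
      module
    rw [e3, norm_smul, hnorm3]
    calc (3⁻¹:ℝ)^n * ‖f ((3:ℂ)^n • x) + f ((3:ℂ)^n • y)
            + f ((2:ℂ)•((3:ℂ)^n • y) - (3:ℂ)^n • x) - f ((3:ℂ)•((3:ℂ)^n • y))‖
        ≤ (3⁻¹:ℝ)^n * θ := mul_le_mul_of_nonneg_left (E1 _ _) (by positivity)
      _ = θ * (3⁻¹:ℝ)^n := by ring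
  -- limit identity : unit-circle homogeneity (raw)
  have Lμ : ∀ μ : ℂ, ‖μ‖ = 1 → ∀ x : A, h (μ•x) + μ • h (-x) = 0 := by
    intro μ hμ x
    refine aux_lim_zero (fun n => S n (μ•x) + μ • S n (-x)) _
      ((hs (μ•x)).add ((hs (-x)).const_smul μ)) θ ?_
    intro n
    try dsimp only
    have e1 : (3:ℂ)^n • (μ•x) = μ • ((3:ℂ)^n • x) := by module
    have e2 : (3:ℂ)^n • (-x) = -((3:ℂ)^n • x) := by module
    have e3 : S n (μ•x) + μ • S n (-x)
        = ((3:ℂ)^n)⁻¹ • (f (μ • ((3:ℂ)^n • x)) + μ • f (-((3:ℂ)^n • x))) := by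
      simp only [hSdef, e1, e2]
      module
    rw [e3, norm_smul, hnorm3]
    calc (3⁻¹:ℝ)^n * ‖f (μ • ((3:ℂ)^n • x)) + μ • f (-((3:ℂ)^n • x))‖
        ≤ (3⁻¹:ℝ)^n * θ := mul_le_mul_of_nonneg_left (Eμ μ hμ _) (by positivity)
      _ = θ * (3⁻¹:ℝ)^n := by ring
  -- limit identity : Jordan property
  have LJ : ∀ c : A, h (c^2) = (h c)^2 := by
    intro c
    have key : (0:ℂ) • h (-c) + (0:ℂ) • h c + h (c^2) - (h c)^2 = 0 := by
      have htwo : Tendsto (fun n : ℕ => 2*n) atTop atTop :=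
        tendsto_atTop_atTop.2 (fun b => ⟨b, fun n hn => by omega⟩)
      have hz : Tendsto (fun n : ℕ => ((3:ℂ)^n)⁻¹) atTop (𝓝 0) := by
        simp only [← inv_pow]
        exact tendsto_pow_atTop_nhds_zero_of_norm_lt_one (by norm_num)
      refine aux_lim_zero
        (fun n => ((3:ℂ)^n)⁻¹ • S n (-c) + ((3:ℂ)^n)⁻¹ • S n c + S (2*n) (c^2) - (S n c)^2) _
        (((((hz.smul (hs (-c))).add (hz.smul (hs c)))).add ((hs (c^2)).comp htwo)).sub
          ((hs c).pow 2)) θ ?_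
      intro n
      try dsimp only
      have e1 : (3:ℂ)^(2*n) • c^2 = ((3:ℂ)^n • c)^2 := by
        rw [smul_pow, ← pow_mul, mul_comm]
      have e2 : ((3:ℂ)^(2*n))⁻¹ = (((3:ℂ)^n)⁻¹)^2 := by
        rw [inv_pow, ← pow_mul, mul_comm]
      have e4 : (S n c)^2 = ((3:ℂ)^(2*n))⁻¹ • (f ((3:ℂ)^n • c))^2 := by
        simp only [hSdef]
        rw [smul_pow, e2]
      have e3 : ((3:ℂ)^n)⁻¹ • S n (-c) + ((3:ℂ)^n)⁻¹ • S n c + S (2*n) (c^2) - (S n c)^2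
          = ((3:ℂ)^(2*n))⁻¹ • (f ((3:ℂ)^n • (-c)) + f ((3:ℂ)^n • c)
              + f (((3:ℂ)^n • c)^2) - (f ((3:ℂ)^n • c))^2) := by
        simp only [hSdef, e1]
        rw [e4]
        simp only [smul_smul, e2]
        module
      rw [e3, norm_smul]
      have hn2 : ‖((3:ℂ)^(2*n))⁻¹‖ ≤ (3⁻¹:ℝ)^n := by
        rw [hnorm3]
        apply pow_le_pow_of_le_one (by norm_num) (by norm_num)
        omega
      have hb : ‖f ((3:ℂ)^n • (-c)) + f ((3:ℂ)^n • c)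
              + f (((3:ℂ)^n • c)^2) - (f ((3:ℂ)^n • c))^2‖ ≤ θ := by
        have := Ec ((3:ℂ)^n • c)
        have eneg : (3:ℂ)^n • (-c) = -((3:ℂ)^n • c) := by module
        rw [eneg]
        exact this
      calc ‖((3:ℂ)^(2*n))⁻¹‖ * ‖f ((3:ℂ)^n • (-c)) + f ((3:ℂ)^n • c)
              + f (((3:ℂ)^n • c)^2) - (f ((3:ℂ)^n • c))^2‖
          ≤ (3⁻¹:ℝ)^n * θ := by
            apply mul_le_mul hn2 hb (norm_nonneg _) (by positivity)
        _ = θ * (3⁻¹:ℝ)^n := by ring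
    simp only [zero_smul, zero_add, sub_eq_zero] at key
    exact key
  -- limit identity : star property
  have Lstar : ∀ a : A, h (star a) = star (h a) := by
    intro a
    have key : h (star a) - star (h a) = 0 := by
      refine aux_lim_zero (fun n => S n (star a) - star (S n a)) _
        ((hs (star a)).sub (hs a).star) θ ?_
      intro n
      try dsimp only
      have e1 : (3:ℂ)^n • star a = star ((3:ℂ)^n • a) := by
        simp [star_smul]
      have e2 : star (S n a) = ((3:ℂ)^n)⁻¹ • star (f ((3:ℂ)^n • a)) := by
        simp [hSdef, star_smul]
      have e3 : S n (star a) - star (S n a)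
          = ((3:ℂ)^n)⁻¹ • (f (star ((3:ℂ)^n • a)) - star (f ((3:ℂ)^n • a))) := by
        simp only [hSdef, e1]
        rw [e2, smul_sub]
      rw [e3, norm_smul, hnorm3]
      calc (3⁻¹:ℝ)^n * ‖f (star ((3:ℂ)^n • a)) - star (f ((3:ℂ)^n • a))‖
          ≤ (3⁻¹:ℝ)^n * θ := mul_le_mul_of_nonneg_left (hstar _) (by positivity)
        _ = θ * (3⁻¹:ℝ)^n := by ring
    rwa [sub_eq_zero] at key
  -- algebraic consequences
  have hzero : h 0 = 0 := by
    refine tendsto_nhds_unique (hs 0) ?_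
    have e : (fun n => S n 0) = fun _ => (0:B) := by
      funext n; simp [hSdef, hf0]
    rw [e]
    exact tendsto_const_nhds
  have hodd : ∀ x : A, h (-x) = - h x := by
    intro x
    have H := Lμ 1 (by norm_num) x
    rw [one_smul, one_smul] at H
    exact eq_neg_of_add_eq_zero_right H
  have hhom : ∀ μ : ℂ, ‖μ‖ = 1 → ∀ x : A, h (μ • x) = μ • h x := by
    intro μ hμ x
    have H := Lμ μ hμ x
    rw [hodd x, smul_neg, ← sub_eq_add_neg, sub_eq_zero] at H
    exact H
  have htriple : ∀ y : A, h ((3:ℂ)•y) = (3:ℂ) • h y := by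
    intro y
    have H := L1 y y
    have e : (2:ℂ)•y - y = y := by module
    rw [e, sub_eq_zero] at H
    rw [← H]
    module
  have hdouble : ∀ y : A, h ((2:ℂ)•y) = (2:ℂ) • h y := by
    intro y
    have HH := L1 0 y
    rw [hzero, zero_add, sub_zero, htriple, sub_eq_zero] at HH
    have e : h ((2:ℂ)•y) = (3:ℂ)•h y - h y := by rw [← HH]; abel
    rw [e]
    module
  have hadd : ∀ u v : A, h (u + v) = h u + h v := by
    intro u v
    set y := (2:ℂ)⁻¹ • (u + v) with hy
    have H := L1 u y
    have e1 : (2:ℂ)•y - u = v := by rw [hy]; module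
    rw [e1, sub_eq_zero, htriple y] at H
    have e3 : u + v = (2:ℂ)•y := by rw [hy]; module
    rw [e3, hdouble y]
    have e4 : h u + h v = (3:ℂ)•h y - h y := by rw [← H]; abel
    rw [e4]
    module
  have hnat : ∀ (n:ℕ) (x : A), h ((n:ℂ) • x) = (n:ℂ) • h x := by
    intro n
    induction n with
    | zero => intro x; simp [hzero]
    | succ k ih =>
      intro x
      have e : ((k+1:ℕ):ℂ) • x = (k:ℂ)•x + x := by push_cast; module
      rw [e, hadd, ih]
      push_cast
      module
  have hsmall : ∀ r : ℝ, |r| ≤ 1 → ∀ x : A, h (((2*r : ℝ):ℂ) • x) = ((2*r:ℝ):ℂ) • h x := by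
    intro r hr x
    have hr2 : r^2 ≤ 1 := by nlinarith [le_abs_self r, neg_abs_le r]
    set s := Real.sqrt (1 - r^2) with hsdef
    have hs2 : s * s = 1 - r^2 := Real.mul_self_sqrt (by linarith)
    set μ : ℂ := ⟨r, s⟩ with hμdef
    have hμ : ‖μ‖ = 1 := by
      rw [Complex.norm_def, Complex.normSq_mk]
      rw [show r * r + s * s = 1 by nlinarith]
      exact Real.sqrt_one
    have hμ' : ‖(starRingEnd ℂ) μ‖ = 1 := by rwa [RCLike.norm_conj]
    have hsum : μ + (starRingEnd ℂ) μ = ((2*r : ℝ) : ℂ) := by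
      rw [Complex.add_conj]
    have e : ((2*r:ℝ):ℂ) • x = μ • x + (starRingEnd ℂ) μ • x := by
      rw [← add_smul, hsum]
    rw [e, hadd, hhom μ hμ, hhom _ hμ', ← add_smul, hsum]
  have hrealhom : ∀ (t : ℝ) (x : A), h ((t:ℂ) • x) = (t:ℂ) • h x := by
    intro t x
    obtain ⟨n, hn0, htn⟩ : ∃ n : ℕ, n ≠ 0 ∧ |t| ≤ n :=
      ⟨⌈|t|⌉₊ + 1, by omega, le_trans (Nat.le_ceil _) (by exact_mod_cast Nat.le_succ _)⟩
    have hnpos : (0:ℝ) < n := by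
      have : 0 < n := Nat.pos_of_ne_zero hn0
      exact_mod_cast this
    have hnne : (n:ℂ) ≠ 0 := Nat.cast_ne_zero.mpr hn0
    set r : ℝ := t / (2*n) with hr
    have hrabs : |r| ≤ 1 := by
      rw [hr, abs_div, div_le_one (by positivity), abs_of_pos (by positivity : (0:ℝ) < 2*n)]
      linarith
    have h2r : 2*r = t/n := by rw [hr]; field_simp; try ring
    have e : ((t/(n:ℝ) : ℝ) : ℂ) * (n:ℂ) = (t:ℂ) := by
      push_cast
      field_simp
    have key := hsmall r hrabs ((n:ℂ) • x)
    rw [h2r, smul_smul, e, hnat n x, smul_smul, e] at key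
    exact key
  have hsmul : ∀ (z : ℂ) (x : A), h (z • x) = z • h x := by
    intro z x
    have e : z • x = ((z.re : ℝ):ℂ) • x + ((z.im : ℝ):ℂ) • (Complex.I • x) := by
      rw [smul_smul, ← add_smul]
      congr 1
      exact (Complex.re_add_im z).symm
    rw [e, hadd, hrealhom, hrealhom, hhom Complex.I (by simp) x, smul_smul, ← add_smul]
    congr 1
    exact Complex.re_add_im z
  -- assemble
  refine ⟨h, ⟨⟨⟨hadd, fun c x => hsmul c x⟩, LJ, Lstar⟩, hbound⟩, ?_⟩
  rintro h' ⟨⟨hlin', -, -⟩, hb'⟩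
  funext a
  have key : ∀ n : ℕ, ‖h' a - h a‖ ≤ (2*θ) * (3⁻¹:ℝ)^n := by
    intro n
    have e' : h' ((3:ℂ)^n • a) = (3:ℂ)^n • h' a := hlin'.map_smul _ _
    have e : h ((3:ℂ)^n • a) = (3:ℂ)^n • h a := hsmul _ _
    have tri : ‖h' ((3:ℂ)^n • a) - h ((3:ℂ)^n • a)‖ ≤ 2*θ := by
      have t1 := hb' ((3:ℂ)^n • a)
      have t2 := hbound ((3:ℂ)^n • a)
      rw [norm_sub_rev] at t1
      calc ‖h' ((3:ℂ)^n • a) - h ((3:ℂ)^n • a)‖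
          = ‖(h' ((3:ℂ)^n • a) - f ((3:ℂ)^n • a)) + (f ((3:ℂ)^n • a) - h ((3:ℂ)^n • a))‖ := by
            rw [sub_add_sub_cancel]
        _ ≤ ‖h' ((3:ℂ)^n • a) - f ((3:ℂ)^n • a)‖ + ‖f ((3:ℂ)^n • a) - h ((3:ℂ)^n • a)‖ :=
            norm_add_le _ _
        _ ≤ 2*θ := by linarith
    rw [e', e, ← smul_sub, norm_smul, norm_pow, h3] at tri
    have step := mul_le_mul_of_nonneg_left tri (by positivity : (0:ℝ) ≤ (3⁻¹:ℝ)^n)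
    rw [← mul_assoc, ← mul_pow, inv_mul_cancel₀ (by norm_num : (3:ℝ) ≠ 0), one_pow,
      one_mul] at step
    calc ‖h' a - h a‖ ≤ (3⁻¹:ℝ)^n * (2*θ) := step
      _ = (2*θ) * (3⁻¹:ℝ)^n := mul_comm _ _
  have hle0 : ‖h' a - h a‖ ≤ 0 := ge_of_tendsto' (aux_geo (2*θ)) key
  have : h' a - h a = 0 := norm_le_zero_iff.mp hle0
  exact sub_eq_zero.mp this
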